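/- In Setup B, let J₁, J₂ ∈ Λ with n+1 ∉ J₁ or n+1 ∉ J₂, let c¹ = (c¹_i)_{i∈J₁} and c² = (c²_i)_{i∈J₂} be families of integers (with a choice of i₀ ∈ I'∖J made for each of J₁, J₂ that contains n+1, defining the corresponding F-set). If C(J₁,c¹) is not contained in C(J₂,c²), then the set difference F(J₁,c¹) ∖ F(J₂,c²) is nonempty and, equipped with the subspace topology from ℝⁿ, is a contractible topological space. -/

import Mathlib

open scoped RealInnerProductSpace BigOperators

noncomputable section

/-- Euclidean space `ℝⁿ` with the standard inner product. -/
abbrev E (n : ℕ) : Type := EuclideanSpace ℝ (Fin n)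

/-- The index set `I' = {1,…,n'}` inside `Ī = {1,…,n+1}` (index `Fin.last n`
plays the role of `n+1`). -/
def Iprime (n n' : ℕ) : Finset (Fin (n + 1)) := Finset.univ.filter fun i => i.val < n'

/-- `C(J,c) := {x ∈ ℝⁿ : ⟨x, b_i⟩ > c_i for all i ∈ J}`. -/
def CSet (n : ℕ) (b : Fin (n + 1) → E n) (J : Finset (Fin (n + 1)))
    (c : Fin (n + 1) → ℤ) : Set (E n) :=
  {x | ∀ i ∈ J, (c i : ℝ) < ⟪x, b i⟫}

/-- A multi-index `𝔪 = (m_i)_{i ∈ I'∖{i₀}}` is admissible if `m_i ≥ 0` for every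
`i ∈ I' ∩ J` (recall `i₀ ∉ J`). -/
def Admissible (n n' : ℕ) (J : Finset (Fin (n + 1))) (m : Fin (n + 1) → ℤ) : Prop :=
  ∀ i ∈ Iprime n n' ∩ J, 0 ≤ m i

/-- The ceiling bound
`⌈(c_{n+1} − Σ_{i∈I'∩J} α_i(c_i+m_i) − Σ_{i∈I'∩K₁} α_i m_i)/α_{i₀}⌉`,
where `K₁ = Ī∖(J∪{i₀})`, so `I'∩K₁ = (I'∖J)∖{i₀}`. -/
def ceilB (n n' : ℕ) (α : Fin (n + 1) → ℚ) (J : Finset (Fin (n + 1)))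
    (i₀ : Fin (n + 1)) (c m : Fin (n + 1) → ℤ) : ℤ :=
  ⌈((c (Fin.last n) : ℚ) - ∑ i ∈ Iprime n n' ∩ J, α i * ((c i : ℚ) + (m i : ℚ))
      - ∑ i ∈ (Iprime n n' \ J).erase i₀, α i * (m i : ℚ)) / α i₀⌉

/-- `V(J,c,𝔪)` as in Setup B. -/
def VSet (n n' : ℕ) (b : Fin (n + 1) → E n) (α : Fin (n + 1) → ℚ)
    (J : Finset (Fin (n + 1))) (i₀ : Fin (n + 1)) (c m : Fin (n + 1) → ℤ) :
    Set (E n) :=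
  {x | (∀ i ∈ Iprime n n' ∩ J, ((c i : ℝ) + (m i : ℝ)) < ⟪x, b i⟫)
    ∧ (∀ i ∈ (Iprime n n' \ J).erase i₀, (m i : ℝ) < ⟪x, b i⟫)
    ∧ (∀ i ∈ (J \ Iprime n n').erase (Fin.last n), (c i : ℝ) < ⟪x, b i⟫)
    ∧ ((ceilB n n' α J i₀ c m : ℝ) < ⟪x, b i₀⟫)}

/-- `F(J,c) := ⋃_{𝔪 admissible} V(J,c,𝔪)` (for `n+1 ∈ J`, with the choice `i₀`). -/
def FSetB (n n' : ℕ) (b : Fin (n + 1) → E n) (α : Fin (n + 1) → ℚ)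
    (J : Finset (Fin (n + 1))) (i₀ : Fin (n + 1)) (c : Fin (n + 1) → ℤ) : Set (E n) :=
  {x | ∃ m : Fin (n + 1) → ℤ, Admissible n n' J m ∧ x ∈ VSet n n' b α J i₀ c m}

/-- `F(J,c)` in general: the union above when `n+1 ∈ J`, and `C(J,c)` otherwise. -/
def FSetB' (n n' : ℕ) (b : Fin (n + 1) → E n) (α : Fin (n + 1) → ℚ)
    (J : Finset (Fin (n + 1))) (i₀ : Fin (n + 1)) (c : Fin (n + 1) → ℤ) : Set (E n) :=
  if Fin.last n ∈ J then FSetB n n' b α J i₀ c else CSet n b J c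


namespace Stmt5Aux


variable {n n' : ℕ} {b : Fin (n + 1) → E n} {α : Fin (n + 1) → ℚ}

lemma mem_Iprime {i : Fin (n+1)} : i ∈ Iprime n n' ↔ i.val < n' := by
  simp [Iprime]

lemma ne_last_of_mem_Iprime (hn'n : n' ≤ n) {i : Fin (n+1)} (hi : i ∈ Iprime n n') :
    i ≠ Fin.last n := by
  rw [mem_Iprime] at hi
  intro h
  rw [h] at hi
  simp only [Fin.val_last] at hi
  omega

/-- coordinates of a point w.r.t. the `b` family -/
def yco (b : Fin (n + 1) → E n) (x : E n) : Fin (n + 1) → ℝ := fun i => ⟪x, b i⟫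

lemma continuous_yco : Continuous fun x => yco b x := by
  apply continuous_pi
  intro i
  exact (continuous_id.inner continuous_const)

/-- point with prescribed coordinates -/
def ptv (v : Fin (n + 1) → E n) (z : Fin (n + 1) → ℝ) : E n :=
  ∑ j ∈ Finset.univ.erase (Fin.last n), z j • v j

lemma continuous_ptv (v : Fin (n + 1) → E n) : Continuous fun z => ptv v z := by
  apply continuous_finset_sum
  intro j _
  exact (continuous_apply j).smul continuous_const

section dual

/-- dual family property -/
def IsDual (b v : Fin (n + 1) → E n) : Prop :=
  ∀ j, j ≠ Fin.last n → ∀ i, i ≠ Fin.last n → (⟪v j, b i⟫ : ℝ) = if i = j then 1 else 0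

lemma exists_dual
    (hb : LinearIndependent ℝ fun i : Fin n => b i.castSucc)
    (hspan : Submodule.span ℝ (Set.range fun i : Fin n => b i.castSucc) = ⊤) :
    ∃ v : Fin (n + 1) → E n, IsDual b v := by
  classical
  let Bb : Module.Basis (Fin n) ℝ (E n) := Module.Basis.mk hb (by rw [hspan])
  refine ⟨fun j =>
    if h : j = Fin.last n then 0 else
      (InnerProductSpace.toDual ℝ (E n)).symm
        (LinearMap.toContinuousLinearMap (Bb.coord (j.castPred h))), ?_⟩
  intro j hj i hi
  simp only [dif_neg hj]
  rw [InnerProductSpace.toDual_symm_apply]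
  have hbi : b i = Bb (i.castPred hi) := by
    simp [Bb, Module.Basis.mk_apply, Fin.castSucc_castPred]
  rw [hbi]
  simp only [LinearMap.coe_toContinuousLinearMap', Module.Basis.coord_apply, Module.Basis.repr_self]
  rw [Finsupp.single_apply]
  by_cases h : i = j
  · subst h; simp
  · rw [if_neg, if_neg h]
    intro hc
    exact h (by
      have := congrArg (Fin.castSucc) hc
      rwa [Fin.castSucc_castPred, Fin.castSucc_castPred] at this)

lemma eq_of_yco
    (hspan : Submodule.span ℝ (Set.range fun i : Fin n => b i.castSucc) = ⊤)
    {x y : E n} (h : ∀ i, i ≠ Fin.last n → yco b x i = yco b y i) : x = y := by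
  have hperp : ∀ z ∈ Submodule.span ℝ (Set.range fun i : Fin n => b i.castSucc),
      (⟪x - y, z⟫ : ℝ) = 0 := by
    intro z hz
    induction hz using Submodule.span_induction with
    | mem z hz =>
      obtain ⟨i, rfl⟩ := hz
      have := h i.castSucc (Fin.castSucc_lt_last i).ne
      simp only [yco] at this
      rw [inner_sub_left, this, sub_self]
    | zero => simp
    | add u v _ _ hu hv => rw [inner_add_right, hu, hv, add_zero]
    | smul a u _ hu => rw [real_inner_smul_right, hu, mul_zero]
  have : (⟪x - y, x - y⟫ : ℝ) = 0 := hperp _ (by rw [hspan]; trivial)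
  exact sub_eq_zero.mp (inner_self_eq_zero.mp this)

end dual


section Part2

def gB (n n' : ℕ) (α : Fin (n + 1) → ℚ) (i₀ : Fin (n + 1)) (cl : ℤ)
    (z : Fin (n + 1) → ℝ) : ℤ :=
  ⌈((cl : ℚ) - ∑ i ∈ (Iprime n n').erase i₀, α i * ((⌈z i⌉ - 1 : ℤ) : ℚ)) / α i₀⌉

variable {n n' : ℕ} {b : Fin (n + 1) → E n} {α : Fin (n + 1) → ℚ}
  {v : Fin (n + 1) → E n} {J : Finset (Fin (n + 1))} {i₀ : Fin (n + 1)}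

lemma yco_ptv (hv : IsDual b v) {i : Fin (n + 1)} (hi : i ≠ Fin.last n)
    (z : Fin (n + 1) → ℝ) : yco b (ptv v z) i = z i := by
  unfold yco ptv
  rw [sum_inner]
  rw [Finset.sum_eq_single i]
  · rw [real_inner_smul_left, hv i (by simpa using hi) i hi, if_pos rfl, mul_one]
  · intro j hj hji
    rw [real_inner_smul_left, hv j (Finset.mem_erase.mp hj).1 i hi, if_neg (fun h => hji h.symm),
      mul_zero]
  · intro h
    exact absurd (Finset.mem_erase.mpr ⟨hi, Finset.mem_univ i⟩) h

lemma ptv_yco (hspan : Submodule.span ℝ (Set.range fun i : Fin n => b i.castSucc) = ⊤)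
    (hv : IsDual b v) (x : E n) : ptv v (yco b x) = x := by
  apply eq_of_yco hspan
  intro i hi
  rw [yco_ptv hv hi]

lemma yco_last (hlast : b (Fin.last n) = ∑ i ∈ Iprime n n', (α i : ℝ) • b i) (x : E n) :
    yco b x (Fin.last n) = ∑ i ∈ Iprime n n', (α i : ℝ) * yco b x i := by
  unfold yco
  rw [hlast, inner_sum]
  exact Finset.sum_congr rfl fun i _ => real_inner_smul_right _ _ _

lemma partition_sum {M : Type*} [AddCommMonoid M] (hi₀ : i₀ ∈ Iprime n n' \ J)
    (f : Fin (n + 1) → M) :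
    ∑ i ∈ (Iprime n n').erase i₀, f i
      = ∑ i ∈ Iprime n n' ∩ J, f i + ∑ i ∈ (Iprime n n' \ J).erase i₀, f i := by
  classical
  rw [Finset.mem_sdiff] at hi₀
  rw [← Finset.sum_union]
  · apply Finset.sum_congr _ fun _ _ => rfl
    ext i
    simp only [Finset.mem_union, Finset.mem_inter, Finset.mem_erase, Finset.mem_sdiff]
    constructor
    · rintro ⟨hne, hI⟩
      by_cases hiJ : i ∈ J
      · exact Or.inl ⟨hI, hiJ⟩
      · exact Or.inr ⟨hne, hI, hiJ⟩
    · rintro (⟨hI, hiJ⟩ | ⟨hne, hI, _⟩)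
      · refine ⟨?_, hI⟩
        rintro rfl
        exact hi₀.2 hiJ
      · exact ⟨hne, hI⟩
  · rw [Finset.disjoint_left]
    intro i hi hi2
    exact (Finset.mem_sdiff.mp (Finset.mem_of_mem_erase hi2)).2 (Finset.mem_inter.mp hi).2

lemma gB_mono (hαpos : ∀ i ∈ Iprime n n', 0 < α i) (hi₀ : i₀ ∈ Iprime n n')
    (cl : ℤ) {z w : Fin (n + 1) → ℝ}
    (h : ∀ i ∈ (Iprime n n').erase i₀, z i ≤ w i) :
    gB n n' α i₀ cl w ≤ gB n n' α i₀ cl z := by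
  apply Int.ceil_le_ceil
  have h0 : (0:ℚ) < α i₀ := hαpos i₀ hi₀
  have hs : ∑ i ∈ (Iprime n n').erase i₀, α i * ((⌈z i⌉ - 1 : ℤ) : ℚ)
      ≤ ∑ i ∈ (Iprime n n').erase i₀, α i * ((⌈w i⌉ - 1 : ℤ) : ℚ) := by
    apply Finset.sum_le_sum
    intro i hi
    have hαi : (0:ℚ) ≤ α i := (hαpos i (Finset.mem_of_mem_erase hi)).le
    have h2 : ⌈z i⌉ ≤ ⌈w i⌉ := Int.ceil_mono (h i hi)
    have h3 : ((⌈z i⌉ - 1 : ℤ) : ℚ) ≤ ((⌈w i⌉ - 1 : ℤ) : ℚ) := by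
      exact_mod_cast sub_le_sub_right h2 1
    exact mul_le_mul_of_nonneg_left h3 hαi
  gcongr

lemma lt_gB_iff (hαpos : 0 < α i₀) {f : ℤ} {cl : ℤ} {z : Fin (n + 1) → ℝ} :
    f < gB n n' α i₀ cl z ↔
      ∑ i ∈ (Iprime n n').erase i₀, α i * ((⌈z i⌉ - 1 : ℤ) : ℚ) < (cl : ℚ) - α i₀ * f := by
  unfold gB
  rw [Int.lt_ceil, lt_div_iff₀ hαpos]
  constructor <;> intro h <;> nlinarith [h]

lemma gB_lower (hαpos : 0 < α i₀) (cl : ℤ) (z : Fin (n + 1) → ℝ) :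
    (cl : ℚ) - ∑ i ∈ (Iprime n n').erase i₀, α i * ((⌈z i⌉ - 1 : ℤ) : ℚ)
      ≤ α i₀ * (gB n n' α i₀ cl z) := by
  have h := Int.le_ceil (((cl : ℚ)
    - ∑ i ∈ (Iprime n n').erase i₀, α i * ((⌈z i⌉ - 1 : ℤ) : ℚ)) / α i₀)
  rw [div_le_iff₀ hαpos] at h
  unfold gB
  nlinarith [h]

lemma gB_lt_of_sum (hαpos : ∀ i ∈ Iprime n n', 0 < α i) (hi₀ : i₀ ∈ Iprime n n')
    (cl : ℤ) (z : Fin (n + 1) → ℝ)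
    (hsum : (cl : ℝ) + (∑ i ∈ (Iprime n n').erase i₀, (α i : ℝ)) + 2 * (α i₀ : ℝ)
      ≤ ∑ i ∈ Iprime n n', (α i : ℝ) * z i) :
    ((gB n n' α i₀ cl z : ℤ) : ℝ) < z i₀ := by
  have hαR : (0:ℝ) < (α i₀ : ℝ) := by exact_mod_cast hαpos i₀ hi₀
  set Q : ℚ := (cl : ℚ) - ∑ i ∈ (Iprime n n').erase i₀, α i * ((⌈z i⌉ - 1 : ℤ) : ℚ) with hQdef
  have h1 : ((gB n n' α i₀ cl z : ℤ) : ℚ) < Q / α i₀ + 1 := Int.ceil_lt_add_one _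
  have h1' : ((gB n n' α i₀ cl z : ℤ) : ℝ) < (Q : ℝ) / (α i₀ : ℝ) + 1 := by
    exact_mod_cast h1
  have hQcast : (Q : ℝ)
      = (cl : ℝ) - ∑ i ∈ (Iprime n n').erase i₀, (α i : ℝ) * ((⌈z i⌉ : ℤ) - 1 : ℝ) := by
    rw [hQdef]
    push_cast
    ring
  have h2 : (Q : ℝ) ≤ (cl : ℝ) - ∑ i ∈ (Iprime n n').erase i₀, (α i : ℝ) * (z i - 1) := by
    rw [hQcast]
    gcongr ((_:ℝ) - ?_)
    apply Finset.sum_le_sum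
    intro i hi
    have hαi : (0:ℝ) ≤ (α i : ℝ) := by
      exact_mod_cast (hαpos i (Finset.mem_of_mem_erase hi)).le
    have := Int.le_ceil (z i)
    apply mul_le_mul_of_nonneg_left _ hαi
    linarith
  have hexp : ∑ i ∈ (Iprime n n').erase i₀, (α i : ℝ) * (z i - 1)
      = (∑ i ∈ (Iprime n n').erase i₀, (α i : ℝ) * z i)
        - ∑ i ∈ (Iprime n n').erase i₀, (α i : ℝ) := by
    rw [← Finset.sum_sub_distrib]
    exact Finset.sum_congr rfl fun i _ => by ring
  have hsplit : (α i₀ : ℝ) * z i₀ + ∑ i ∈ (Iprime n n').erase i₀, (α i : ℝ) * z i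
      = ∑ i ∈ Iprime n n', (α i : ℝ) * z i :=
    Finset.add_sum_erase _ (fun i => (α i : ℝ) * z i) hi₀
  have key : (Q : ℝ) ≤ (α i₀ : ℝ) * (z i₀ - 1) := by nlinarith
  have : (Q : ℝ) / (α i₀ : ℝ) + 1 ≤ z i₀ := by
    rw [div_add' _ _ _ (ne_of_gt hαR), div_le_iff₀ hαR]
    nlinarith
  linarith

end Part2

section Part3

variable {n n' : ℕ} {b : Fin (n + 1) → E n} {α : Fin (n + 1) → ℚ}
  {J : Finset (Fin (n + 1))} {i₀ : Fin (n + 1)}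

lemma memF_iff (hn'n : n' ≤ n) (hαpos : ∀ i ∈ Iprime n n', 0 < α i)
    (hJ : Fin.last n ∈ J) (hi₀ : i₀ ∈ Iprime n n' \ J)
    (c : Fin (n + 1) → ℤ) (x : E n) :
    x ∈ FSetB n n' b α J i₀ c ↔
      ((∀ i ∈ J, i ≠ Fin.last n → (c i : ℝ) < yco b x i) ∧
        ((gB n n' α i₀ (c (Fin.last n)) (yco b x) : ℤ) : ℝ) < yco b x i₀) := by
  classical
  have hi₀I : i₀ ∈ Iprime n n' := (Finset.mem_sdiff.mp hi₀).1
  have hi₀J : i₀ ∉ J := (Finset.mem_sdiff.mp hi₀).2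
  constructor
  · rintro ⟨m, hadm, h1, h2, h3, h4⟩
    constructor
    · intro i hiJ hine
      by_cases hiI : i ∈ Iprime n n'
      · have hbd := h1 i (Finset.mem_inter.mpr ⟨hiI, hiJ⟩)
        have hm : (0:ℝ) ≤ (m i : ℝ) := by
          exact_mod_cast hadm i (Finset.mem_inter.mpr ⟨hiI, hiJ⟩)
        have : yco b x i = ⟪x, b i⟫ := rfl
        rw [this]
        linarith
      · exact h3 i (Finset.mem_erase.mpr ⟨hine, Finset.mem_sdiff.mpr ⟨hiJ, hiI⟩⟩)
    · have hle : gB n n' α i₀ (c (Fin.last n)) (yco b x) ≤ ceilB n n' α J i₀ c m := by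
        apply Int.ceil_le_ceil
        have h0 : (0:ℚ) < α i₀ := hαpos i₀ hi₀I
        have hsplit := partition_sum (M := ℚ) hi₀
          (fun i => α i * ((⌈yco b x i⌉ - 1 : ℤ) : ℚ))
        rw [hsplit]
        have t1 : ∑ i ∈ Iprime n n' ∩ J, α i * ((c i : ℚ) + (m i : ℚ))
            ≤ ∑ i ∈ Iprime n n' ∩ J, α i * ((⌈yco b x i⌉ - 1 : ℤ) : ℚ) := by
          apply Finset.sum_le_sum
          intro i hi
          have hαi : (0:ℚ) ≤ α i :=
            (hαpos i (Finset.mem_inter.mp hi).1).le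
          have hbd := h1 i hi
          have : c i + m i < ⌈yco b x i⌉ := by
            rw [Int.lt_ceil]
            push_cast
            exact hbd
          have : c i + m i ≤ ⌈yco b x i⌉ - 1 := by omega
          have hq : (c i : ℚ) + (m i : ℚ) ≤ ((⌈yco b x i⌉ - 1 : ℤ) : ℚ) := by exact_mod_cast this
          exact mul_le_mul_of_nonneg_left hq hαi
        have t2 : ∑ i ∈ (Iprime n n' \ J).erase i₀, α i * (m i : ℚ)
            ≤ ∑ i ∈ (Iprime n n' \ J).erase i₀, α i * ((⌈yco b x i⌉ - 1 : ℤ) : ℚ) := by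
          apply Finset.sum_le_sum
          intro i hi
          have hαi : (0:ℚ) ≤ α i :=
            (hαpos i (Finset.mem_sdiff.mp (Finset.mem_of_mem_erase hi)).1).le
          have hbd := h2 i hi
          have : m i < ⌈yco b x i⌉ := by
            rw [Int.lt_ceil]; exact hbd
          have : m i ≤ ⌈yco b x i⌉ - 1 := by omega
          have hq : (m i : ℚ) ≤ ((⌈yco b x i⌉ - 1 : ℤ) : ℚ) := by exact_mod_cast this
          exact mul_le_mul_of_nonneg_left hq hαi
        gcongr ?_ / _
        linarith
      calc ((gB n n' α i₀ (c (Fin.last n)) (yco b x) : ℤ) : ℝ)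
          ≤ ((ceilB n n' α J i₀ c m : ℤ) : ℝ) := by exact_mod_cast hle
        _ < _ := h4
  · rintro ⟨hbd, hst⟩
    refine ⟨fun i => ⌈yco b x i⌉ - 1 - (if i ∈ J then c i else 0), ?_, ?_, ?_, ?_, ?_⟩
    · intro i hi
      dsimp only
      have hiJ : i ∈ J := (Finset.mem_inter.mp hi).2
      have hiI : i ∈ Iprime n n' := (Finset.mem_inter.mp hi).1
      rw [if_pos hiJ]
      have h5 := hbd i hiJ (ne_last_of_mem_Iprime hn'n hiI)
      have : c i < ⌈yco b x i⌉ := by rw [Int.lt_ceil]; exact h5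
      omega
    · intro i hi
      dsimp only
      have hiJ : i ∈ J := (Finset.mem_inter.mp hi).2
      rw [if_pos hiJ]
      have h5 := Int.ceil_lt_add_one (yco b x i)
      have h6 : yco b x i = ⟪x, b i⟫ := rfl
      rw [h6] at h5 ⊢
      push_cast
      linarith
    · intro i hi
      dsimp only
      have hiJ : i ∉ J := (Finset.mem_sdiff.mp (Finset.mem_of_mem_erase hi)).2
      rw [if_neg hiJ]
      have h5 := Int.ceil_lt_add_one (yco b x i)
      have h6 : yco b x i = ⟪x, b i⟫ := rfl
      rw [h6] at h5 ⊢
      push_cast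
      linarith
    · intro i hi
      exact hbd i (Finset.mem_sdiff.mp (Finset.mem_of_mem_erase hi)).1
        (Finset.mem_erase.mp hi).1
    · have heq : ceilB n n' α J i₀ c
          (fun i => ⌈yco b x i⌉ - 1 - (if i ∈ J then c i else 0))
          = gB n n' α i₀ (c (Fin.last n)) (yco b x) := by
        unfold ceilB gB
        congr 1
        simp only
        rw [partition_sum (M := ℚ) hi₀ (fun i => α i * ((⌈yco b x i⌉ - 1 : ℤ) : ℚ))]
        have e1 : ∑ i ∈ Iprime n n' ∩ J,
            α i * ((c i : ℚ) + ((⌈yco b x i⌉ - 1 - (if i ∈ J then c i else 0) : ℤ) : ℚ))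
            = ∑ i ∈ Iprime n n' ∩ J, α i * ((⌈yco b x i⌉ - 1 : ℤ) : ℚ) := by
          apply Finset.sum_congr rfl
          intro i hi
          rw [if_pos (Finset.mem_inter.mp hi).2]
          push_cast
          ring
        have e2 : ∑ i ∈ (Iprime n n' \ J).erase i₀,
            α i * (((⌈yco b x i⌉ - 1 - (if i ∈ J then c i else 0) : ℤ)) : ℚ)
            = ∑ i ∈ (Iprime n n' \ J).erase i₀, α i * ((⌈yco b x i⌉ - 1 : ℤ) : ℚ) := by
          apply Finset.sum_congr rfl
          intro i hi
          rw [if_neg (Finset.mem_sdiff.mp (Finset.mem_of_mem_erase hi)).2]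
          norm_num
        rw [e1, e2]
        ring
      rw [heq]
      exact hst

lemma not_mem_CSet_iff {c : Fin (n + 1) → ℤ} {x : E n} :
    x ∉ CSet n b J c ↔ ∃ i ∈ J, yco b x i ≤ (c i : ℝ) := by
  unfold CSet yco
  simp only [Set.mem_setOf_eq, not_forall, not_lt]
  constructor
  · rintro ⟨i, hi, h⟩; exact ⟨i, hi, h⟩
  · rintro ⟨i, hi, h⟩; exact ⟨i, hi, h⟩

lemma mem_CSet_iff {c : Fin (n + 1) → ℤ} {x : E n} :
    x ∈ CSet n b J c ↔ ∀ i ∈ J, (c i : ℝ) < yco b x i := Iff.rfl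

end Part3

section Part4

variable {n n' : ℕ} {b : Fin (n + 1) → E n} {α : Fin (n + 1) → ℚ}

lemma min_le_combo {u w t : ℝ} (h0 : 0 ≤ t) (h1 : t ≤ 1) :
    min u w ≤ (1 - t) * u + t * w := by
  rcases le_total u w with h | h
  · rw [min_eq_left h]; nlinarith
  · rw [min_eq_right h]; nlinarith

lemma combo_le_max {u w t : ℝ} (h0 : 0 ≤ t) (h1 : t ≤ 1) :
    (1 - t) * u + t * w ≤ max u w := by
  rcases le_total u w with h | h
  · rw [max_eq_right h]; nlinarith
  · rw [max_eq_left h]; nlinarith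

lemma combo_lt {cc u w t : ℝ} (h0 : 0 ≤ t) (h1 : t ≤ 1) (hu : cc < u) (hw : cc < w) :
    cc < (1 - t) * u + t * w :=
  lt_of_lt_of_le (lt_min hu hw) (min_le_combo h0 h1)

lemma combo_le {cc u w t : ℝ} (h0 : 0 ≤ t) (h1 : t ≤ 1) (hu : u ≤ cc) (hw : w ≤ cc) :
    (1 - t) * u + t * w ≤ cc :=
  le_trans (combo_le_max h0 h1) (max_le hu hw)

lemma le_combo {cc u w t : ℝ} (h0 : 0 ≤ t) (h1 : t ≤ 1) (hu : cc ≤ u) (hw : cc ≤ w) :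
    cc ≤ (1 - t) * u + t * w :=
  le_trans (le_min hu hw) (min_le_combo h0 h1)

/-- continuous map on a subtype induced by a time-indexed family preserving `D` -/
def stageCM (D : Set (E n)) (g : ℝ → E n → E n)
    (hg : Continuous fun p : ℝ × E n => g p.1 p.2)
    (hmem : ∀ t, 0 ≤ t → t ≤ 1 → ∀ x ∈ D, g t x ∈ D)
    (t : ℝ) (ht0 : 0 ≤ t) (ht1 : t ≤ 1) : C(↥D, ↥D) :=
  ⟨fun x => ⟨g t x, hmem t ht0 ht1 x x.2⟩, by
    apply Continuous.subtype_mk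
    exact hg.comp (continuous_const.prodMk continuous_subtype_val)⟩

def stageH (D : Set (E n)) (g : ℝ → E n → E n)
    (hg : Continuous fun p : ℝ × E n => g p.1 p.2)
    (hmem : ∀ t, 0 ≤ t → t ≤ 1 → ∀ x ∈ D, g t x ∈ D) :
    (stageCM D g hg hmem 0 le_rfl zero_le_one).Homotopy
      (stageCM D g hg hmem 1 zero_le_one le_rfl) where
  toFun := fun p => ⟨g p.1 p.2, hmem p.1 p.1.2.1 p.1.2.2 p.2 p.2.2⟩
  continuous_toFun := by
    apply Continuous.subtype_mk
    exact hg.comp ((continuous_subtype_val.comp continuous_fst).prodMk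
      (continuous_subtype_val.comp continuous_snd))
  map_zero_left := fun x => rfl
  map_one_left := fun x => rfl

lemma gB_congr {i₀ : Fin (n + 1)} (cl : ℤ) {z w : Fin (n + 1) → ℝ}
    (h : ∀ i ∈ (Iprime n n').erase i₀, z i = w i) :
    gB n n' α i₀ cl z = gB n n' α i₀ cl w := by
  unfold gB
  have hs : ∑ i ∈ (Iprime n n').erase i₀, α i * ((⌈z i⌉ - 1 : ℤ) : ℚ)
      = ∑ i ∈ (Iprime n n').erase i₀, α i * ((⌈w i⌉ - 1 : ℤ) : ℚ) := by
    apply Finset.sum_congr rfl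
    intro i hi
    rw [h i hi]
  rw [hs]

lemma continuous_yco_apply (b : Fin (n + 1) → E n) (i : Fin (n + 1)) :
    Continuous fun p : ℝ × E n => yco b p.2 i :=
  continuous_snd.inner continuous_const

end Part4

section Part5

variable {n n' : ℕ} {b : Fin (n + 1) → E n} {α : Fin (n + 1) → ℚ}
  {v : Fin (n + 1) → E n}

def base (J₁ J₂ : Finset (Fin (n + 1))) (c₁ c₂ : Fin (n + 1) → ℤ) : Fin (n + 1) → ℝ :=
  fun i => if i ∈ J₂ ∧ (i ∈ J₁ → c₁ i < c₂ i) then (c₂ i : ℝ) else (c₁ i : ℝ) + 1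

lemma base_gt {J₁ J₂ : Finset (Fin (n + 1))} {c₁ c₂ : Fin (n + 1) → ℤ} {i : Fin (n + 1)}
    (hi : i ∈ J₁) : (c₁ i : ℝ) < base J₁ J₂ c₁ c₂ i := by
  unfold base
  split_ifs with h
  · exact_mod_cast h.2 hi
  · linarith

lemma base_eq {J₁ J₂ : Finset (Fin (n + 1))} {c₁ c₂ : Fin (n + 1) → ℤ} {i : Fin (n + 1)}
    (hi₂ : i ∈ J₂) (hlt : i ∈ J₁ → c₁ i < c₂ i) : base J₁ J₂ c₁ c₂ i = (c₂ i : ℝ) :=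
  if_pos ⟨hi₂, hlt⟩

lemma yco_combo {a t : ℝ} (P y : E n) (i : Fin (n + 1)) :
    yco b (a • P + t • y) i = a * yco b P i + t * yco b y i := by
  unfold yco
  rw [inner_add_left, real_inner_smul_left, real_inner_smul_left]

lemma int_lt_of_real {p q : ℤ} {r : ℝ} (h1 : (p : ℝ) < r) (h2 : r ≤ (q : ℝ)) : p < q := by
  exact_mod_cast lt_of_lt_of_le h1 h2

lemma caseA {J₁ J₂ : Finset (Fin (n + 1))} {c₁ c₂ : Fin (n + 1) → ℤ}
    (hspan : Submodule.span ℝ (Set.range fun i : Fin n => b i.castSucc) = ⊤)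
    (hv : IsDual b v)
    (hJ₁l : Fin.last n ∉ J₁) (hJ₂l : Fin.last n ∉ J₂)
    (hCne : ¬ CSet n b J₁ c₁ ⊆ CSet n b J₂ c₂) :
    (CSet n b J₁ c₁ \ CSet n b J₂ c₂).Nonempty ∧
      ContractibleSpace ↥(CSet n b J₁ c₁ \ CSet n b J₂ c₂) := by
  obtain ⟨x₀, hx₀C, hx₀N⟩ := Set.not_subset.mp hCne
  obtain ⟨i₁, hi₁J, hi₁le⟩ := not_mem_CSet_iff.mp hx₀N
  have hlast_ne : ∀ i ∈ J₁, i ≠ Fin.last n := fun i hi h => hJ₁l (h ▸ hi)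
  have hlast_ne₂ : ∀ i ∈ J₂, i ≠ Fin.last n := fun i hi h => hJ₂l (h ▸ hi)
  have hi₁lt : i₁ ∈ J₁ → c₁ i₁ < c₂ i₁ := fun h =>
    int_lt_of_real (mem_CSet_iff.mp hx₀C i₁ h) hi₁le
  set P := ptv v (base J₁ J₂ c₁ c₂) with hPdef
  have hPC : P ∈ CSet n b J₁ c₁ := by
    intro i hi
    show (c₁ i : ℝ) < yco b P i
    rw [hPdef, yco_ptv hv (hlast_ne i hi)]
    exact base_gt hi
  have hPN : P ∉ CSet n b J₂ c₂ := by
    apply not_mem_CSet_iff.mpr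
    refine ⟨i₁, hi₁J, ?_⟩
    rw [hPdef, yco_ptv hv (hlast_ne₂ i₁ hi₁J), base_eq hi₁J hi₁lt]
  have hP : P ∈ CSet n b J₁ c₁ \ CSet n b J₂ c₂ := ⟨hPC, hPN⟩
  refine ⟨⟨P, hP⟩, ?_⟩
  apply StarConvex.contractibleSpace (x := P) ?_ ⟨P, hP⟩
  intro y hy a t ha ht hat
  have hae : a = 1 - t := by linarith
  have ht1 : t ≤ 1 := by linarith
  subst hae
  constructor
  · intro i hi
    show (c₁ i : ℝ) < yco b ((1 - t) • P + t • y) i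
    rw [yco_combo, hPdef, yco_ptv hv (hlast_ne i hi)]
    exact combo_lt ht ht1 (base_gt hi) (hy.1 i hi)
  · apply not_mem_CSet_iff.mpr
    obtain ⟨i₂, hi₂J, hi₂le⟩ := not_mem_CSet_iff.mp hy.2
    have hi₂lt : i₂ ∈ J₁ → c₁ i₂ < c₂ i₂ := fun h =>
      int_lt_of_real (hy.1 i₂ h) hi₂le
    refine ⟨i₂, hi₂J, ?_⟩
    rw [yco_combo, hPdef, yco_ptv hv (hlast_ne₂ i₂ hi₂J), base_eq hi₂J hi₂lt]
    exact combo_le ht ht1 le_rfl hi₂le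

end Part5

section Part6

variable {n n' : ℕ} {b : Fin (n + 1) → E n} {α : Fin (n + 1) → ℚ}
  {v : Fin (n + 1) → E n} {L i₀ : Fin (n + 1)}

/-- threshold for the linear sufficient condition for the staircase bound -/
def thB (n n' : ℕ) (α : Fin (n + 1) → ℚ) (i₀ : Fin (n + 1)) (cl : ℤ) : ℝ :=
  (cl : ℝ) + (∑ i ∈ (Iprime n n').erase i₀, (α i : ℝ)) + 2 * (α i₀ : ℝ)

/-- compensator value: `y L ≥ cY … y` forces `∑_{I'} α y ≥ Th`. -/
def cY (n n' : ℕ) (α : Fin (n + 1) → ℚ) (L : Fin (n + 1)) (Th : ℝ)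
    (y : Fin (n + 1) → ℝ) : ℝ :=
  (Th - ∑ i ∈ (Iprime n n').erase L, (α i : ℝ) * y i) / (α L : ℝ)

lemma cY_congr {Th : ℝ} {y z : Fin (n + 1) → ℝ}
    (h : ∀ i ∈ (Iprime n n').erase L, y i = z i) :
    cY n n' α L Th y = cY n n' α L Th z := by
  unfold cY
  congr 1
  congr 1
  exact Finset.sum_congr rfl fun i hi => by rw [h i hi]

lemma sum_ge_of_cY (hαpos : ∀ i ∈ Iprime n n', 0 < α i) (hL : L ∈ Iprime n n')
    {Th : ℝ} {y : Fin (n + 1) → ℝ} (h : cY n n' α L Th y ≤ y L) :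
    Th ≤ ∑ i ∈ Iprime n n', (α i : ℝ) * y i := by
  have hα : (0:ℝ) < (α L : ℝ) := by exact_mod_cast hαpos L hL
  rw [cY, div_le_iff₀ hα] at h
  rw [← Finset.add_sum_erase _ (fun i => (α i : ℝ) * y i) hL]
  nlinarith

lemma gB_lt_of_th (hαpos : ∀ i ∈ Iprime n n', 0 < α i) (hi₀ : i₀ ∈ Iprime n n')
    {cl : ℤ} {z : Fin (n + 1) → ℝ}
    (h : thB n n' α i₀ cl ≤ ∑ i ∈ Iprime n n', (α i : ℝ) * z i) :
    ((gB n n' α i₀ cl z : ℤ) : ℝ) < z i₀ := by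
  apply gB_lt_of_sum hαpos hi₀ cl z
  rw [thB] at h
  linarith

lemma continuous_cY {Th : ℝ} :
    Continuous fun y : Fin (n + 1) → ℝ => cY n n' α L Th y := by
  apply Continuous.div_const
  apply Continuous.sub continuous_const
  apply continuous_finset_sum
  intro i _
  exact continuous_const.mul (continuous_apply i)

end Part6

section Part7

variable {n n' : ℕ} {b : Fin (n + 1) → E n} {α : Fin (n + 1) → ℚ}
  {v : Fin (n + 1) → E n}

lemma caseB1 {J₁ J₂ : Finset (Fin (n + 1))} {c₁ c₂ : Fin (n + 1) → ℤ} {i₀ L : Fin (n + 1)}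
    (hn'n : n' ≤ n)
    (hspan : Submodule.span ℝ (Set.range fun i : Fin n => b i.castSucc) = ⊤)
    (hv : IsDual b v)
    (hαpos : ∀ i ∈ Iprime n n', 0 < α i)
    (hJ₁l : Fin.last n ∈ J₁) (hJ₂l : Fin.last n ∉ J₂)
    (hi₀ : i₀ ∈ Iprime n n' \ J₁)
    (hL : L ∈ Iprime n n') (hLJ₂ : L ∉ J₂)
    (hC : ¬ CSet n b J₁ c₁ ⊆ CSet n b J₂ c₂) :
    (FSetB n n' b α J₁ i₀ c₁ \ CSet n b J₂ c₂).Nonempty ∧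
      ContractibleSpace ↥(FSetB n n' b α J₁ i₀ c₁ \ CSet n b J₂ c₂) := by
  classical
  have hi₀I : i₀ ∈ Iprime n n' := (Finset.mem_sdiff.mp hi₀).1
  have hi₀last : i₀ ≠ Fin.last n := ne_last_of_mem_Iprime hn'n hi₀I
  have hLlast : L ≠ Fin.last n := ne_last_of_mem_Iprime hn'n hL
  have hJ₂last : ∀ i ∈ J₂, i ≠ Fin.last n := fun i hi h => hJ₂l (h ▸ hi)
  set D := FSetB n n' b α J₁ i₀ c₁ \ CSet n b J₂ c₂ with hDdef
  set Th : ℝ := thB n n' α i₀ (c₁ (Fin.last n)) with hThdef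
  -- membership criterion for points given by coordinates
  have hmemD : ∀ z : Fin (n + 1) → ℝ,
      (∀ i ∈ J₁, i ≠ Fin.last n → (c₁ i : ℝ) < z i) →
      (((gB n n' α i₀ (c₁ (Fin.last n)) z : ℤ) : ℝ) < z i₀) →
      (∃ i ∈ J₂, z i ≤ (c₂ i : ℝ)) → ptv v z ∈ D := by
    intro z h1 h2 h3
    constructor
    · rw [memF_iff hn'n hαpos hJ₁l hi₀]
      refine ⟨fun i hi hne => ?_, ?_⟩
      · rw [yco_ptv hv hne]; exact h1 i hi hne
      · have e1 : gB n n' α i₀ (c₁ (Fin.last n)) (yco b (ptv v z))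
            = gB n n' α i₀ (c₁ (Fin.last n)) z :=
          gB_congr _ (fun i hi =>
            yco_ptv hv (ne_last_of_mem_Iprime hn'n (Finset.mem_of_mem_erase hi)) z)
        rw [e1, yco_ptv hv hi₀last]
        exact h2
    · obtain ⟨i₁, hi₁, hle⟩ := h3
      exact not_mem_CSet_iff.mpr ⟨i₁, hi₁, by rw [yco_ptv hv (hJ₂last i₁ hi₁)]; exact hle⟩
  -- nonemptiness
  obtain ⟨x₀, hx₀C, hx₀N⟩ := Set.not_subset.mp hC
  obtain ⟨i₁, hi₁J, hi₁le⟩ := not_mem_CSet_iff.mp hx₀N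
  have hi₁L : i₁ ≠ L := fun h => hLJ₂ (h ▸ hi₁J)
  have hw₀ : ptv v (fun i => if i = L
      then max (yco b x₀ L) (cY n n' α L Th (yco b x₀)) else yco b x₀ i) ∈ D := by
    apply hmemD
    · intro i hi hne
      by_cases hiL : i = L
      · subst hiL
        rw [if_pos rfl]
        exact lt_of_lt_of_le (hx₀C i hi) (le_max_left _ _)
      · rw [if_neg hiL]
        exact hx₀C i hi
    · apply gB_lt_of_th hαpos hi₀I
      apply sum_ge_of_cY hαpos hL
      rw [if_pos rfl]
      have : cY n n' α L Th (fun i => if i = L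
          then max (yco b x₀ L) (cY n n' α L Th (yco b x₀)) else yco b x₀ i)
          = cY n n' α L Th (yco b x₀) :=
        cY_congr (fun i hi => by rw [if_neg (Finset.mem_erase.mp hi).1])
      rw [this]
      exact le_max_right _ _
    · exact ⟨i₁, hi₁J, by rw [if_neg hi₁L]; exact hi₁le⟩
  have hDne : D.Nonempty := ⟨_, hw₀⟩
  -- target point
  set pb : Fin (n + 1) → ℝ := base J₁ J₂ c₁ c₂ with hpbdef
  set pL : ℝ := max (cY n n' α L Th pb) ((c₁ L : ℝ) + 1) with hpLdef
  set pv : Fin (n + 1) → ℝ := fun i => if i = L then pL else pb i with hpvdef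
  have hpv_erase : ∀ i ∈ (Iprime n n').erase L, pv i = pb i := fun i hi => by
    rw [hpvdef]; simp only [if_neg (Finset.mem_erase.mp hi).1]
  have hcYpv : cY n n' α L Th pv = cY n n' α L Th pb := cY_congr hpv_erase
  have hpv_bound : ∀ i ∈ J₁, i ≠ Fin.last n → (c₁ i : ℝ) < pv i := by
    intro i hi hne
    rw [hpvdef]
    by_cases hiL : i = L
    · subst hiL
      simp only [if_pos rfl, hpLdef]
      have : (c₁ i : ℝ) < (c₁ i : ℝ) + 1 := by linarith
      exact lt_of_lt_of_le this (le_max_right _ _)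
    · simp only [if_neg hiL]
      exact base_gt hi
  have hpv_st : ((gB n n' α i₀ (c₁ (Fin.last n)) pv : ℤ) : ℝ) < pv i₀ := by
    apply gB_lt_of_th hαpos hi₀I
    apply sum_ge_of_cY hαpos hL
    rw [hcYpv]
    have : pv L = pL := by rw [hpvdef]; simp
    rw [this, hpLdef]
    exact le_max_left _ _
  have hi₁lt : i₁ ∈ J₁ → c₁ i₁ < c₂ i₁ := fun h =>
    int_lt_of_real (hx₀C i₁ h) hi₁le
  have hpb_i₁ : pb i₁ = (c₂ i₁ : ℝ) := base_eq hi₁J hi₁lt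
  have hpv_piece : ∃ i ∈ J₂, pv i ≤ (c₂ i : ℝ) :=
    ⟨i₁, hi₁J, by rw [hpvdef]; simp only [if_neg hi₁L]; rw [hpb_i₁]⟩
  have hP : ptv v pv ∈ D := hmemD pv hpv_bound hpv_st hpv_piece
  refine ⟨hDne, ?_⟩
  -- stage A
  set gA : ℝ → E n → E n := fun t x => ptv v (fun i => if i = L
    then (1 - t) * yco b x L + t * max (yco b x L) (cY n n' α L Th (yco b x))
    else yco b x i) with hgAdef
  have hgAc : Continuous fun p : ℝ × E n => gA p.1 p.2 := by
    apply (continuous_ptv v).comp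
    apply continuous_pi
    intro i
    by_cases hiL : i = L
    · subst hiL
      simp only [if_pos rfl]
      apply Continuous.add
      · exact (continuous_const.sub continuous_fst).mul (continuous_yco_apply b i)
      · apply continuous_fst.mul
        apply Continuous.max (continuous_yco_apply b i)
        exact continuous_cY.comp (continuous_yco.comp continuous_snd)
    · simp only [if_neg hiL]
      exact continuous_yco_apply b i
  have hmemA : ∀ t, 0 ≤ t → t ≤ 1 → ∀ x ∈ D, gA t x ∈ D := by
    intro t ht0 ht1 x hx
    obtain ⟨hb1, hs1⟩ := (memF_iff hn'n hαpos hJ₁l hi₀ c₁ x).mp hx.1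
    obtain ⟨jw, hjw, hjle⟩ := not_mem_CSet_iff.mp hx.2
    have hjL : jw ≠ L := fun h => hLJ₂ (h ▸ hjw)
    have hzL : yco b x L ≤ (1 - t) * yco b x L
        + t * max (yco b x L) (cY n n' α L Th (yco b x)) :=
      le_combo ht0 ht1 le_rfl (le_max_left _ _)
    apply hmemD
    · intro i hi hne
      by_cases hiL : i = L
      · subst hiL
        rw [if_pos rfl]
        exact lt_of_lt_of_le (hb1 _ hi hne) hzL
      · rw [if_neg hiL]
        exact hb1 i hi hne
    · have hge : ∀ i ∈ (Iprime n n').erase i₀, yco b x i ≤ (fun i => if i = L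
          then (1 - t) * yco b x L + t * max (yco b x L) (cY n n' α L Th (yco b x))
          else yco b x i) i := by
        intro i _
        dsimp only
        by_cases hiL : i = L
        · subst hiL; rw [if_pos rfl]; exact hzL
        · rw [if_neg hiL]
      have hgm := gB_mono (i₀ := i₀) hαpos hi₀I (c₁ (Fin.last n)) hge
      have hi₀z : yco b x i₀ ≤ (fun i => if i = L
          then (1 - t) * yco b x L + t * max (yco b x L) (cY n n' α L Th (yco b x))
          else yco b x i) i₀ := by
        dsimp only
        by_cases hiL : i₀ = L
        · rw [if_pos hiL, hiL]; exact hzL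
        · rw [if_neg hiL]
      calc ((gB n n' α i₀ (c₁ (Fin.last n)) _ : ℤ) : ℝ)
          ≤ ((gB n n' α i₀ (c₁ (Fin.last n)) (yco b x) : ℤ) : ℝ) := by exact_mod_cast hgm
        _ < yco b x i₀ := hs1
        _ ≤ _ := hi₀z
    · exact ⟨jw, hjw, by rw [if_neg hjL]; exact hjle⟩
  -- stage B
  set gBm : ℝ → E n → E n := fun s x => ptv v (fun i => if i = L
    then max ((1 - s) * max (yco b x L) (cY n n' α L Th (yco b x)) + s * pL)
      (cY n n' α L Th (fun i => (1 - s) * yco b x i + s * pv i))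
    else (1 - s) * yco b x i + s * pv i) with hgBdef
  have hgBc : Continuous fun p : ℝ × E n => gBm p.1 p.2 := by
    apply (continuous_ptv v).comp
    apply continuous_pi
    intro i
    have hlin : Continuous fun p : ℝ × E n =>
        (fun i => (1 - p.1) * yco b p.2 i + p.1 * pv i) := by
      apply continuous_pi
      intro i
      exact ((continuous_const.sub continuous_fst).mul (continuous_yco_apply b i)).add
        (continuous_fst.mul continuous_const)
    by_cases hiL : i = L
    · subst hiL
      simp only [if_pos rfl]
      apply Continuous.max
      · apply Continuous.add _ (continuous_fst.mul continuous_const)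
        apply (continuous_const.sub continuous_fst).mul
        exact Continuous.max (continuous_yco_apply b i)
          (continuous_cY.comp (continuous_yco.comp continuous_snd))
      · exact continuous_cY.comp hlin
    · simp only [if_neg hiL]
      exact ((continuous_const.sub continuous_fst).mul (continuous_yco_apply b i)).add
        (continuous_fst.mul continuous_const)
  have hmemB : ∀ s, 0 ≤ s → s ≤ 1 → ∀ x ∈ D, gBm s x ∈ D := by
    intro s hs0 hs1 x hx
    obtain ⟨hb1, hst1⟩ := (memF_iff hn'n hαpos hJ₁l hi₀ c₁ x).mp hx.1
    obtain ⟨jw, hjw, hjle⟩ := not_mem_CSet_iff.mp hx.2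
    have hjL : jw ≠ L := fun h => hLJ₂ (h ▸ hjw)
    have hjlast : jw ≠ Fin.last n := hJ₂last jw hjw
    apply hmemD
    · intro i hi hne
      by_cases hiL : i = L
      · subst hiL
        rw [if_pos rfl]
        apply lt_of_lt_of_le _ (le_max_left _ _)
        apply combo_lt hs0 hs1
        · exact lt_of_lt_of_le (hb1 _ hi hne) (le_max_left _ _)
        · rw [hpLdef]
          have : (c₁ i : ℝ) < (c₁ i : ℝ) + 1 := by linarith
          exact lt_of_lt_of_le this (le_max_right _ _)
      · rw [if_neg hiL]
        apply combo_lt hs0 hs1 (hb1 i hi hne)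
        have : pv i = pb i := by rw [hpvdef]; simp only [if_neg hiL]
        rw [this]
        exact base_gt hi
    · apply gB_lt_of_th hαpos hi₀I
      apply sum_ge_of_cY hαpos hL
      rw [if_pos rfl]
      have he : cY n n' α L Th (fun i => if i = L
          then max ((1 - s) * max (yco b x L) (cY n n' α L Th (yco b x)) + s * pL)
            (cY n n' α L Th (fun i => (1 - s) * yco b x i + s * pv i))
          else (1 - s) * yco b x i + s * pv i)
          = cY n n' α L Th (fun i => (1 - s) * yco b x i + s * pv i) :=
        cY_congr (fun i hi => by rw [if_neg (Finset.mem_erase.mp hi).1])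
      rw [he]
      exact le_max_right _ _
    · refine ⟨jw, hjw, ?_⟩
      rw [if_neg hjL]
      have hjlt : jw ∈ J₁ → c₁ jw < c₂ jw := fun h =>
        int_lt_of_real (hb1 jw h hjlast) hjle
      have : pv jw = (c₂ jw : ℝ) := by
        rw [hpvdef]; simp only [if_neg hjL]; exact base_eq hjw hjlt
      rw [this]
      exact combo_le hs0 hs1 hjle le_rfl
  -- endpoints
  have egA0 : stageCM D gA hgAc hmemA 0 le_rfl zero_le_one = ContinuousMap.id ↥D := by
    apply ContinuousMap.ext
    intro x
    apply Subtype.ext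
    show gA 0 (x : E n) = (x : E n)
    rw [hgAdef]
    dsimp only
    have : (fun i => if i = L then (1 - (0:ℝ)) * yco b (x : E n) L
        + 0 * max (yco b (x : E n) L) (cY n n' α L Th (yco b (x : E n)))
        else yco b (x : E n) i) = yco b (x : E n) := by
      funext i
      split_ifs with h
      · subst h; ring
      · rfl
    rw [this, ptv_yco hspan hv]
  have egA1 : stageCM D gA hgAc hmemA 1 zero_le_one le_rfl
      = stageCM D gBm hgBc hmemB 0 le_rfl zero_le_one := by
    apply ContinuousMap.ext
    intro x
    apply Subtype.ext
    show gA 1 (x : E n) = gBm 0 (x : E n)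
    rw [hgAdef, hgBdef]
    dsimp only
    apply congrArg (ptv v)
    funext i
    split_ifs with h
    · have hcy0 : cY n n' α L Th (fun i => (1 - (0:ℝ)) * yco b (x : E n) i + 0 * pv i)
          = cY n n' α L Th (yco b (x : E n)) :=
        cY_congr (fun i _ => by ring)
      rw [hcy0]
      rw [show ((1:ℝ) - 1) * yco b (x : E n) L
        + 1 * max (yco b (x : E n) L) (cY n n' α L Th (yco b (x : E n)))
        = max (yco b (x : E n) L) (cY n n' α L Th (yco b (x : E n))) by ring]
      rw [show ((1:ℝ) - 0) * max (yco b (x : E n) L) (cY n n' α L Th (yco b (x : E n)))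
        + 0 * pL = max (yco b (x : E n) L) (cY n n' α L Th (yco b (x : E n))) by ring]
      rw [max_assoc, max_self]
    · ring
  have egB1 : stageCM D gBm hgBc hmemB 1 zero_le_one le_rfl
      = ContinuousMap.const ↥D ⟨ptv v pv, hP⟩ := by
    apply ContinuousMap.ext
    intro x
    apply Subtype.ext
    show gBm 1 (x : E n) = ptv v pv
    rw [hgBdef]
    dsimp only
    apply congrArg (ptv v)
    funext i
    split_ifs with h
    · have hcy1 : cY n n' α L Th (fun i => (1 - (1:ℝ)) * yco b (x : E n) i + 1 * pv i)
          = cY n n' α L Th pb := by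
        rw [cY_congr (fun i _ => by ring : ∀ i ∈ (Iprime n n').erase L, _ = pv i)]
        exact hcYpv
      rw [hcy1]
      rw [show ((1:ℝ) - 1) * max (yco b (x : E n) L) (cY n n' α L Th (yco b (x : E n)))
        + 1 * pL = pL by ring]
      rw [h, hpvdef]
      simp only [if_pos rfl]
      rw [hpLdef]
      exact max_eq_left (le_max_left _ _)
    · ring
  have hnull : (ContinuousMap.id ↥D).Nullhomotopic := by
    refine ⟨⟨ptv v pv, hP⟩, ?_⟩
    constructor
    exact (((stageH D gA hgAc hmemA).cast egA0 egA1).trans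
      ((stageH D gBm hgBc hmemB).cast rfl egB1))
  exact (contractible_iff_id_nullhomotopic ↥D).mpr hnull

end Part7

section Part8

variable {n n' : ℕ} {b : Fin (n + 1) → E n} {α : Fin (n + 1) → ℚ}
  {v : Fin (n + 1) → E n}

lemma caseB2 {J₁ J₂ : Finset (Fin (n + 1))} {c₁ c₂ : Fin (n + 1) → ℤ} {k : Fin (n + 1)}
    (hn'n : n' ≤ n)
    (hspan : Submodule.span ℝ (Set.range fun i : Fin n => b i.castSucc) = ⊤)
    (hv : IsDual b v)
    (hαpos : ∀ i ∈ Iprime n n', 0 < α i)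
    (hlast : b (Fin.last n) = ∑ i ∈ Iprime n n', (α i : ℝ) • b i)
    (hJ₁l : Fin.last n ∉ J₁) (hJ₂l : Fin.last n ∈ J₂)
    (hk : k ∈ Iprime n n' \ J₂)
    (hC : ¬ CSet n b J₁ c₁ ⊆ CSet n b J₂ c₂) :
    (CSet n b J₁ c₁ \ FSetB n n' b α J₂ k c₂).Nonempty ∧
      ContractibleSpace ↥(CSet n b J₁ c₁ \ FSetB n n' b α J₂ k c₂) := by
  classical
  have hkI : k ∈ Iprime n n' := (Finset.mem_sdiff.mp hk).1
  have hkJ₂ : k ∉ J₂ := (Finset.mem_sdiff.mp hk).2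
  have hklast : k ≠ Fin.last n := ne_last_of_mem_Iprime hn'n hkI
  have hJ₁last : ∀ i ∈ J₁, i ≠ Fin.last n := fun i hi h => hJ₁l (h ▸ hi)
  have hαk : (0 : ℚ) < α k := hαpos k hkI
  set D := CSet n b J₁ c₁ \ FSetB n n' b α J₂ k c₂ with hDdef
  -- membership criterion
  have hmemD : ∀ z : Fin (n + 1) → ℝ,
      (∀ i ∈ J₁, (c₁ i : ℝ) < z i) →
      ((∃ i ∈ J₂, i ≠ Fin.last n ∧ z i ≤ (c₂ i : ℝ)) ∨
        z k ≤ ((gB n n' α k (c₂ (Fin.last n)) z : ℤ) : ℝ)) →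
      ptv v z ∈ D := by
    intro z h1 h2
    constructor
    · intro i hi
      show (c₁ i : ℝ) < yco b (ptv v z) i
      rw [yco_ptv hv (hJ₁last i hi)]
      exact h1 i hi
    · rw [memF_iff hn'n hαpos hJ₂l hk]
      have e1 : gB n n' α k (c₂ (Fin.last n)) (yco b (ptv v z))
          = gB n n' α k (c₂ (Fin.last n)) z :=
        gB_congr _ (fun i hi =>
          yco_ptv hv (ne_last_of_mem_Iprime hn'n (Finset.mem_of_mem_erase hi)) z)
      rcases h2 with ⟨i₁, hi₁, hne, hle⟩ | hT
      · rintro ⟨hbd, -⟩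
        have := hbd i₁ hi₁ hne
        rw [yco_ptv hv hne] at this
        linarith
      · rintro ⟨-, hst⟩
        rw [yco_ptv hv hklast, e1] at hst
        linarith
  -- criterion in the reverse direction
  have hmemD' : ∀ x ∈ D, (∀ i ∈ J₁, (c₁ i : ℝ) < yco b x i) ∧
      ((∃ i ∈ J₂, i ≠ Fin.last n ∧ yco b x i ≤ (c₂ i : ℝ)) ∨
        yco b x k ≤ ((gB n n' α k (c₂ (Fin.last n)) (yco b x) : ℤ) : ℝ)) := by
    intro x hx
    refine ⟨fun i hi => hx.1 i hi, ?_⟩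
    have hnF := hx.2
    rw [memF_iff hn'n hαpos hJ₂l hk] at hnF
    by_cases hbd : ∀ i ∈ J₂, i ≠ Fin.last n → (c₂ i : ℝ) < yco b x i
    · right
      by_contra hcon
      push_neg at hcon
      exact hnF ⟨hbd, hcon⟩
    · left
      push_neg at hbd
      obtain ⟨i, hi, hne, hle⟩ := hbd
      exact ⟨i, hi, hne, hle⟩
  -- existence of a "staircase-piece" witness
  set hW : Prop := ∃ x : E n, (∀ i ∈ J₁, (c₁ i : ℝ) < yco b x i) ∧
      yco b x k ≤ ((gB n n' α k (c₂ (Fin.last n)) (yco b x) : ℤ) : ℝ) with hWdef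
  set f : ℤ := if k ∈ J₁ then c₁ k
    else (if h : hW then gB n n' α k (c₂ (Fin.last n)) (yco b h.choose) - 1 else 0) with hfdef
  set κ : Fin (n + 1) → ℤ :=
    fun j => min (c₂ j) (if h : hW then ⌈yco b h.choose j⌉ - 1 else 0) with hκdef
  set r : Fin (n + 1) → ℤ :=
    fun j => if j = k then f + 1 else if j ∈ J₁ then c₁ j + 1 else κ j with hrdef
  set q : Fin (n + 1) → ℝ := fun j => (r j : ℝ) with hqdef
  have hqk : q k = (f : ℝ) + 1 := by
    rw [hqdef, hrdef]; simp only [if_pos rfl]; push_cast; ring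
  -- the key numeric bound, assuming a witness
  have hKEY : hW → ∑ i ∈ (Iprime n n').erase k, α i * ((r i - 1 : ℤ) : ℚ)
      < (c₂ (Fin.last n) : ℚ) - α k * f := by
    intro hw
    have hwC := hw.choose_spec.1
    have hwT := hw.choose_spec.2
    have hfw : f < gB n n' α k (c₂ (Fin.last n)) (yco b hw.choose) := by
      by_cases hkJ₁ : k ∈ J₁
      · have hfe : f = c₁ k := by rw [hfdef, if_pos hkJ₁]
        have h1 := hwC k hkJ₁
        have h2 : (f : ℝ) < ((gB n n' α k (c₂ (Fin.last n)) (yco b hw.choose) : ℤ) : ℝ) := by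
          rw [hfe]
          exact lt_of_lt_of_le h1 hwT
        exact_mod_cast h2
      · have hfe : f = gB n n' α k (c₂ (Fin.last n)) (yco b hw.choose) - 1 := by
          rw [hfdef, if_neg hkJ₁, dif_pos hw]
        omega
    have hsumw := (lt_gB_iff hαk).mp hfw
    calc ∑ i ∈ (Iprime n n').erase k, α i * ((r i - 1 : ℤ) : ℚ)
        ≤ ∑ i ∈ (Iprime n n').erase k, α i * ((⌈yco b hw.choose i⌉ - 1 : ℤ) : ℚ) := by
          apply Finset.sum_le_sum
          intro i hi
          have hine : i ≠ k := (Finset.mem_erase.mp hi).1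
          have hiI : i ∈ Iprime n n' := Finset.mem_of_mem_erase hi
          have hαi : (0 : ℚ) ≤ α i := (hαpos i hiI).le
          have hri : r i ≤ ⌈yco b hw.choose i⌉ := by
            rw [hrdef]
            simp only [if_neg hine]
            by_cases hiJ₁ : i ∈ J₁
            · rw [if_pos hiJ₁]
              have := hwC i hiJ₁
              have : c₁ i < ⌈yco b hw.choose i⌉ := by rw [Int.lt_ceil]; exact this
              omega
            · rw [if_neg hiJ₁, hκdef]
              simp only [dif_pos hw]
              have := min_le_right (c₂ i) (⌈yco b hw.choose i⌉ - 1)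
              omega
          have : ((r i - 1 : ℤ) : ℚ) ≤ ((⌈yco b hw.choose i⌉ - 1 : ℤ) : ℚ) := by
            exact_mod_cast sub_le_sub_right hri 1
          exact mul_le_mul_of_nonneg_left this hαi
      _ < _ := hsumw
  -- staircase bound for any coord function dominated by `q` away from `k`
  have hstair : hW → ∀ z : Fin (n + 1) → ℝ,
      (∀ i ∈ (Iprime n n').erase k, z i ≤ q i) →
      (f : ℝ) + 1 ≤ ((gB n n' α k (c₂ (Fin.last n)) z : ℤ) : ℝ) := by
    intro hw z hz
    have hlt : f < gB n n' α k (c₂ (Fin.last n)) z := by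
      rw [lt_gB_iff hαk]
      calc ∑ i ∈ (Iprime n n').erase k, α i * ((⌈z i⌉ - 1 : ℤ) : ℚ)
          ≤ ∑ i ∈ (Iprime n n').erase k, α i * ((r i - 1 : ℤ) : ℚ) := by
            apply Finset.sum_le_sum
            intro i hi
            have hαi : (0 : ℚ) ≤ α i := (hαpos i (Finset.mem_of_mem_erase hi)).le
            have hce : ⌈z i⌉ ≤ r i := by
              rw [Int.ceil_le]
              have := hz i hi
              rw [hqdef] at this
              exact this
            have : ((⌈z i⌉ - 1 : ℤ) : ℚ) ≤ ((r i - 1 : ℤ) : ℚ) := by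
              exact_mod_cast sub_le_sub_right hce 1
            exact mul_le_mul_of_nonneg_left this hαi
        _ < _ := hKEY hw
    have : f + 1 ≤ gB n n' α k (c₂ (Fin.last n)) z := hlt
    exact_mod_cast this
  -- properties of the target values q
  have hq_gt : ∀ i ∈ Iprime n n', i ∈ J₁ → (c₁ i : ℝ) < q i := by
    intro i hiI hiJ₁
    rw [hqdef, hrdef]
    by_cases hik : i = k
    · subst hik
      simp only [if_pos rfl]
      have hfe : f = c₁ i := by rw [hfdef, if_pos hiJ₁]
      rw [hfe]
      push_cast
      linarith
    · simp only [if_neg hik, if_pos hiJ₁]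
      push_cast
      linarith
  have hq_le : ∀ i ∈ Iprime n n', i ∈ J₂ → (i ∈ J₁ → c₁ i < c₂ i) → q i ≤ (c₂ i : ℝ) := by
    intro i hiI hiJ₂ hlt
    have hik : i ≠ k := fun h => hkJ₂ (h ▸ hiJ₂)
    rw [hqdef, hrdef]
    simp only [if_neg hik]
    by_cases hiJ₁ : i ∈ J₁
    · rw [if_pos hiJ₁]
      have := hlt hiJ₁
      have : c₁ i + 1 ≤ c₂ i := by omega
      exact_mod_cast this
    · rw [if_neg hiJ₁, hκdef]
      have := min_le_left (c₂ i) (if h : hW then ⌈yco b h.choose i⌉ - 1 else 0)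
      exact_mod_cast this
  -- nonemptiness
  obtain ⟨x₀, hx₀C, hx₀N⟩ := Set.not_subset.mp hC
  obtain ⟨i₁, hi₁J, hi₁le⟩ := not_mem_CSet_iff.mp hx₀N
  have hx₀D : x₀ ∈ D := by
    refine ⟨hx₀C, ?_⟩
    rw [memF_iff hn'n hαpos hJ₂l hk]
    rintro ⟨hbd, hst⟩
    by_cases hi₁last : i₁ = Fin.last n
    · subst hi₁last
      have hlam := yco_last (α := α) hlast x₀
      have hgl := gB_lower (n' := n') (i₀ := k) hαk (c₂ (Fin.last n)) (yco b x₀)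
      have hglR := Rat.cast_le (K := ℝ).mpr hgl
      push_cast at hglR
      have hkmul : (α k : ℝ) * ((gB n n' α k (c₂ (Fin.last n)) (yco b x₀) : ℤ) : ℝ)
          < (α k : ℝ) * yco b x₀ k := by
        apply mul_lt_mul_of_pos_left hst
        exact_mod_cast hαk
      have hsum2 : ∑ i ∈ (Iprime n n').erase k, (α i : ℝ) * ((⌈yco b x₀ i⌉ : ℝ) - 1)
          ≤ ∑ i ∈ (Iprime n n').erase k, (α i : ℝ) * yco b x₀ i := by
        apply Finset.sum_le_sum
        intro i hi
        have hαi : (0 : ℝ) ≤ (α i : ℝ) := by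
          exact_mod_cast (hαpos i (Finset.mem_of_mem_erase hi)).le
        have := Int.ceil_lt_add_one (yco b x₀ i)
        apply mul_le_mul_of_nonneg_left _ hαi
        linarith
      have hsplit : (α k : ℝ) * yco b x₀ k
          + ∑ i ∈ (Iprime n n').erase k, (α i : ℝ) * yco b x₀ i
          = ∑ i ∈ Iprime n n', (α i : ℝ) * yco b x₀ i :=
        Finset.add_sum_erase _ (fun i => (α i : ℝ) * yco b x₀ i) hkI
      have : (c₂ (Fin.last n) : ℝ) < yco b x₀ (Fin.last n) := by
        rw [hlam]
        linarith
      linarith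
    · exact absurd (hbd i₁ hi₁J hi₁last) (not_lt.mpr hi₁le)
  have hDne : D.Nonempty := ⟨x₀, hx₀D⟩
  refine ⟨hDne, ?_⟩
  -- final point
  set pfull : Fin (n + 1) → ℝ :=
    fun i => if i ∈ Iprime n n' then q i else base J₁ J₂ c₁ c₂ i with hpfulldef
  have hP : ptv v pfull ∈ D := by
    apply hmemD
    · intro i hi
      rw [hpfulldef]
      by_cases hiI : i ∈ Iprime n n'
      · simp only [if_pos hiI]; exact hq_gt i hiI hi
      · simp only [if_neg hiI]; exact base_gt hi
    · rcases (hmemD' x₀ hx₀D).2 with ⟨i₁', hi₁', hne', hle'⟩ | hT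
      · left
        refine ⟨i₁', hi₁', hne', ?_⟩
        have hlt : i₁' ∈ J₁ → c₁ i₁' < c₂ i₁' := fun h =>
          int_lt_of_real ((hmemD' x₀ hx₀D).1 i₁' h) hle'
        rw [hpfulldef]
        by_cases hiI : i₁' ∈ Iprime n n'
        · simp only [if_pos hiI]; exact hq_le i₁' hiI hi₁' hlt
        · simp only [if_neg hiI]; rw [base_eq hi₁' hlt]
      · right
        have hw : hW := ⟨x₀, (hmemD' x₀ hx₀D).1, hT⟩
        have hzq : ∀ i ∈ (Iprime n n').erase k, pfull i ≤ q i := fun i hi => by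
          rw [hpfulldef]
          simp only [if_pos (Finset.mem_of_mem_erase hi)]
          exact le_rfl
        have hpk : pfull k = (f : ℝ) + 1 := by
          rw [hpfulldef]; simp only [if_pos hkI]; exact hqk
        rw [hpk]
        exact hstair hw pfull hzq
  -- stage A : push down to min(y, q) on I'
  set g1 : ℝ → E n → E n := fun t x => ptv v (fun i => if i ∈ Iprime n n'
    then (1 - t) * yco b x i + t * min (yco b x i) (q i) else yco b x i) with hg1def
  have hg1c : Continuous fun p : ℝ × E n => g1 p.1 p.2 := by
    apply (continuous_ptv v).comp
    apply continuous_pi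
    intro i
    by_cases hiI : i ∈ Iprime n n'
    · simp only [if_pos hiI]
      exact ((continuous_const.sub continuous_fst).mul (continuous_yco_apply b i)).add
        (continuous_fst.mul ((continuous_yco_apply b i).min continuous_const))
    · simp only [if_neg hiI]
      exact continuous_yco_apply b i
  have hmem1 : ∀ t, 0 ≤ t → t ≤ 1 → ∀ x ∈ D, g1 t x ∈ D := by
    intro t ht0 ht1 x hx
    obtain ⟨hxC, hxAlt⟩ := hmemD' x hx
    have hley : ∀ i, i ∈ Iprime n n' →
        (1 - t) * yco b x i + t * min (yco b x i) (q i) ≤ yco b x i := fun i _ =>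
      combo_le ht0 ht1 le_rfl (min_le_left _ _)
    apply hmemD
    · intro i hi
      by_cases hiI : i ∈ Iprime n n'
      · rw [if_pos hiI]
        exact lt_of_lt_of_le (lt_min (hxC i hi) (hq_gt i hiI hi))
          (le_combo ht0 ht1 (min_le_left _ _) le_rfl)
      · rw [if_neg hiI]
        exact hxC i hi
    · rcases hxAlt with ⟨i₁', hi₁', hne', hle'⟩ | hT
      · left
        refine ⟨i₁', hi₁', hne', ?_⟩
        by_cases hiI : i₁' ∈ Iprime n n'
        · rw [if_pos hiI]
          exact le_trans (hley i₁' hiI) hle'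
        · rw [if_neg hiI]
          exact hle'
      · right
        have hge : ∀ i ∈ (Iprime n n').erase k, (fun i => if i ∈ Iprime n n'
            then (1 - t) * yco b x i + t * min (yco b x i) (q i) else yco b x i) i
            ≤ yco b x i := by
          intro i hi
          dsimp only
          by_cases hiI : i ∈ Iprime n n'
          · rw [if_pos hiI]; exact hley i hiI
          · rw [if_neg hiI]
        have hgm := gB_mono (i₀ := k) hαpos hkI (c₂ (Fin.last n)) hge
        have hzk : (fun i => if i ∈ Iprime n n'
            then (1 - t) * yco b x i + t * min (yco b x i) (q i) else yco b x i) k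
            ≤ yco b x k := by
          dsimp only
          rw [if_pos hkI]
          exact hley k hkI
        calc (fun i => if i ∈ Iprime n n'
              then (1 - t) * yco b x i + t * min (yco b x i) (q i) else yco b x i) k
            ≤ yco b x k := hzk
          _ ≤ ((gB n n' α k (c₂ (Fin.last n)) (yco b x) : ℤ) : ℝ) := hT
          _ ≤ _ := by exact_mod_cast hgm
  -- stage B : raise to q on I'
  set g2 : ℝ → E n → E n := fun s x => ptv v (fun i => if i ∈ Iprime n n'
    then (1 - s) * min (yco b x i) (q i) + s * q i else yco b x i) with hg2def
  have hg2c : Continuous fun p : ℝ × E n => g2 p.1 p.2 := by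
    apply (continuous_ptv v).comp
    apply continuous_pi
    intro i
    by_cases hiI : i ∈ Iprime n n'
    · simp only [if_pos hiI]
      exact ((continuous_const.sub continuous_fst).mul
        ((continuous_yco_apply b i).min continuous_const)).add
        (continuous_fst.mul continuous_const)
    · simp only [if_neg hiI]
      exact continuous_yco_apply b i
  have hmem2 : ∀ s, 0 ≤ s → s ≤ 1 → ∀ x ∈ D, g2 s x ∈ D := by
    intro s hs0 hs1 x hx
    obtain ⟨hxC, hxAlt⟩ := hmemD' x hx
    have hup : ∀ i, (1 - s) * min (yco b x i) (q i) + s * q i ≤ q i := fun i =>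
      combo_le hs0 hs1 (min_le_right _ _) le_rfl
    apply hmemD
    · intro i hi
      by_cases hiI : i ∈ Iprime n n'
      · rw [if_pos hiI]
        exact lt_of_lt_of_le (lt_min (hxC i hi) (hq_gt i hiI hi))
          (le_combo hs0 hs1 le_rfl (le_min (min_le_left _ _)
            (min_le_right _ _) |>.trans (min_le_right _ _)))
      · rw [if_neg hiI]
        exact hxC i hi
    · rcases hxAlt with ⟨i₁', hi₁', hne', hle'⟩ | hT
      · left
        refine ⟨i₁', hi₁', hne', ?_⟩
        by_cases hiI : i₁' ∈ Iprime n n'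
        · rw [if_pos hiI]
          have hlt : i₁' ∈ J₁ → c₁ i₁' < c₂ i₁' := fun h =>
            int_lt_of_real (hxC i₁' h) hle'
          exact combo_le hs0 hs1 (le_trans (min_le_left _ _) hle')
            (hq_le i₁' hiI hi₁' hlt)
        · rw [if_neg hiI]
          exact hle'
      · right
        have hw : hW := ⟨x, hxC, hT⟩
        have hzq : ∀ i ∈ (Iprime n n').erase k, (fun i => if i ∈ Iprime n n'
            then (1 - s) * min (yco b x i) (q i) + s * q i else yco b x i) i ≤ q i := by
          intro i hi
          dsimp only
          rw [if_pos (Finset.mem_of_mem_erase hi)]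
          exact hup i
        have := hstair hw _ hzq
        rw [if_pos hkI]
        exact le_trans (hup k) (by rw [hqk] at *; exact this)
  -- stage C : move the remaining coordinates
  set g3 : ℝ → E n → E n := fun u x => ptv v (fun i => if i ∈ Iprime n n'
    then q i else (1 - u) * yco b x i + u * base J₁ J₂ c₁ c₂ i) with hg3def
  have hg3c : Continuous fun p : ℝ × E n => g3 p.1 p.2 := by
    apply (continuous_ptv v).comp
    apply continuous_pi
    intro i
    by_cases hiI : i ∈ Iprime n n'
    · simp only [if_pos hiI]
      exact continuous_const
    · simp only [if_neg hiI]
      exact ((continuous_const.sub continuous_fst).mul (continuous_yco_apply b i)).add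
        (continuous_fst.mul continuous_const)
  have hmem3 : ∀ u, 0 ≤ u → u ≤ 1 → ∀ x ∈ D, g3 u x ∈ D := by
    intro u hu0 hu1 x hx
    obtain ⟨hxC, hxAlt⟩ := hmemD' x hx
    apply hmemD
    · intro i hi
      by_cases hiI : i ∈ Iprime n n'
      · rw [if_pos hiI]
        exact hq_gt i hiI hi
      · rw [if_neg hiI]
        exact combo_lt hu0 hu1 (hxC i hi) (base_gt hi)
    · rcases hxAlt with ⟨i₁', hi₁', hne', hle'⟩ | hT
      · left
        refine ⟨i₁', hi₁', hne', ?_⟩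
        have hlt : i₁' ∈ J₁ → c₁ i₁' < c₂ i₁' := fun h =>
          int_lt_of_real (hxC i₁' h) hle'
        by_cases hiI : i₁' ∈ Iprime n n'
        · rw [if_pos hiI]
          exact hq_le i₁' hiI hi₁' hlt
        · rw [if_neg hiI]
          rw [show base J₁ J₂ c₁ c₂ i₁' = (c₂ i₁' : ℝ) from base_eq hi₁' hlt]
          exact combo_le hu0 hu1 hle' le_rfl
      · right
        have hw : hW := ⟨x, hxC, hT⟩
        have hzq : ∀ i ∈ (Iprime n n').erase k, (fun i => if i ∈ Iprime n n'
            then q i else (1 - u) * yco b x i + u * base J₁ J₂ c₁ c₂ i) i ≤ q i := by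
          intro i hi
          dsimp only
          rw [if_pos (Finset.mem_of_mem_erase hi)]
        have := hstair hw _ hzq
        rw [if_pos hkI]
        rw [hqk]
        exact this
  -- endpoint identifications
  have eg0 : stageCM D g1 hg1c hmem1 0 le_rfl zero_le_one = ContinuousMap.id ↥D := by
    apply ContinuousMap.ext
    intro x
    apply Subtype.ext
    show g1 0 (x : E n) = (x : E n)
    rw [hg1def]
    dsimp only
    have he : (fun i => if i ∈ Iprime n n'
        then (1 - (0:ℝ)) * yco b (x : E n) i + 0 * min (yco b (x : E n) i) (q i)
        else yco b (x : E n) i) = yco b (x : E n) := by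
      funext i
      split_ifs with h
      · ring
      · rfl
    rw [he, ptv_yco hspan hv]
  have eg12 : stageCM D g1 hg1c hmem1 1 zero_le_one le_rfl
      = stageCM D g2 hg2c hmem2 0 le_rfl zero_le_one := by
    apply ContinuousMap.ext
    intro x
    apply Subtype.ext
    show g1 1 (x : E n) = g2 0 (x : E n)
    rw [hg1def, hg2def]
    dsimp only
    apply congrArg (ptv v)
    funext i
    split_ifs with h
    · ring
    · rfl
  have eg23 : stageCM D g2 hg2c hmem2 1 zero_le_one le_rfl
      = stageCM D g3 hg3c hmem3 0 le_rfl zero_le_one := by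
    apply ContinuousMap.ext
    intro x
    apply Subtype.ext
    show g2 1 (x : E n) = g3 0 (x : E n)
    rw [hg2def, hg3def]
    dsimp only
    apply congrArg (ptv v)
    funext i
    split_ifs with h
    · ring
    · ring
  have eg3 : stageCM D g3 hg3c hmem3 1 zero_le_one le_rfl
      = ContinuousMap.const ↥D ⟨ptv v pfull, hP⟩ := by
    apply ContinuousMap.ext
    intro x
    apply Subtype.ext
    show g3 1 (x : E n) = ptv v pfull
    rw [hg3def, hpfulldef]
    dsimp only
    apply congrArg (ptv v)
    funext i
    split_ifs with h
    · rfl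
    · ring
  have hnull : (ContinuousMap.id ↥D).Nullhomotopic := by
    refine ⟨⟨ptv v pfull, hP⟩, ?_⟩
    constructor
    exact ((((stageH D g1 hg1c hmem1).cast eg0 eg12).trans
      ((stageH D g2 hg2c hmem2).cast rfl eg23)).trans
      ((stageH D g3 hg3c hmem3).cast rfl eg3))
  exact (contractible_iff_id_nullhomotopic ↥D).mpr hnull

end Part8

end Stmt5Aux

/-- Setup B: for `J₁, J₂ ∈ Λ` with `n+1 ∉ J₁` or `n+1 ∉ J₂` (and a
choice of `i₀ ∈ I'∖J` for each of `J₁, J₂` that contains `n+1`): if `C(J₁,c¹)` is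
not contained in `C(J₂,c²)`, then `F(J₁,c¹) ∖ F(J₂,c²)` is nonempty and, with the
subspace topology from `ℝⁿ`, contractible. -/
theorem stmt5 (n n' : ℕ) (hn'1 : 1 ≤ n') (hn'n : n' ≤ n)
    (b : Fin (n + 1) → E n) (α : Fin (n + 1) → ℚ)
    (hb : LinearIndependent ℝ fun i : Fin n => b i.castSucc)
    (hspan : Submodule.span ℝ (Set.range fun i : Fin n => b i.castSucc) = ⊤)
    (hα : ∀ i : Fin (n + 1), i.val < n' → 0 < α i)
    (hαsum : ∑ i ∈ Iprime n n', α i ≤ 1)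
    (hlast : b (Fin.last n) = ∑ i ∈ Iprime n n', (α i : ℝ) • b i)
    (J₁ J₂ : Finset (Fin (n + 1)))
    (hJ₁ne : J₁ ≠ Finset.univ) (hJ₁I : ¬ Iprime n n' ⊆ J₁)
    (hJ₂ne : J₂ ≠ Finset.univ) (hJ₂I : ¬ Iprime n n' ⊆ J₂)
    (hor : Fin.last n ∉ J₁ ∨ Fin.last n ∉ J₂)
    (i₁₀ i₂₀ : Fin (n + 1))
    (hi₁₀ : Fin.last n ∈ J₁ → i₁₀ ∈ Iprime n n' \ J₁)
    (hi₂₀ : Fin.last n ∈ J₂ → i₂₀ ∈ Iprime n n' \ J₂)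
    (c₁ c₂ : Fin (n + 1) → ℤ)
    (hC : ¬ CSet n b J₁ c₁ ⊆ CSet n b J₂ c₂) :
    (FSetB' n n' b α J₁ i₁₀ c₁ \ FSetB' n n' b α J₂ i₂₀ c₂).Nonempty ∧
      ContractibleSpace ↥(FSetB' n n' b α J₁ i₁₀ c₁ \ FSetB' n n' b α J₂ i₂₀ c₂) := by
  classical
  obtain ⟨v, hv⟩ := Stmt5Aux.exists_dual hb hspan
  have hαpos : ∀ i ∈ Iprime n n', 0 < α i := fun i hi =>
    hα i (Stmt5Aux.mem_Iprime.mp hi)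
  by_cases hJ₁l : Fin.last n ∈ J₁
  · have hJ₂l : Fin.last n ∉ J₂ := by
      rcases hor with h | h
      · exact absurd hJ₁l h
      · exact h
    obtain ⟨L, hLI, hLJ₂⟩ := Finset.not_subset.mp hJ₂I
    unfold FSetB'
    rw [if_pos hJ₁l, if_neg hJ₂l]
    exact Stmt5Aux.caseB1 hn'n hspan hv hαpos hJ₁l hJ₂l (hi₁₀ hJ₁l) hLI hLJ₂ hC
  · by_cases hJ₂l : Fin.last n ∈ J₂
    · unfold FSetB'
      rw [if_neg hJ₁l, if_pos hJ₂l]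
      exact Stmt5Aux.caseB2 hn'n hspan hv hαpos hlast hJ₁l hJ₂l (hi₂₀ hJ₂l) hC
    · unfold FSetB'
      rw [if_neg hJ₁l, if_neg hJ₂l]
      exact Stmt5Aux.caseA hspan hv hJ₁l hJ₂l hC
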